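/- Let {B_i}_{i∈I} be a finite family of subsets of a finite set X, let p ∈ [0,1], and let X_p be the p-random subset of X (each element included independently with probability p). Then P(B_i ⊄ X_p for all i ∈ I) ≥ Π_{i∈I} P(B_i ⊄ X_p). -/

import Mathlib

open MeasureTheory
open scoped ENNReal NNReal Classical

/-- Harris inequality for antitone functions, deduced from `fkg` on the order dual. -/
lemma harris_antitone {α : Type*} [Fintype α] [DistribLattice α]
    (μ f g : α → ℝ≥0) (hf : Antitone f) (hg : Antitone g)
    (hμ : ∀ a b, μ a * μ b ≤ μ (a ⊓ b) * μ (a ⊔ b)) :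
    (∑ a, μ a * f a) * ∑ a, μ a * g a ≤ (∑ a, μ a) * ∑ a, μ a * (f a * g a) := by
  have key := fkg (α := αᵒᵈ) (β := ℝ≥0)
    (f := fun a => f (OrderDual.ofDual a)) (g := fun a => g (OrderDual.ofDual a))
    (μ := fun a => μ (OrderDual.ofDual a))
    (fun _ => zero_le) (fun _ => zero_le) (fun _ => zero_le)
    (fun a b hab => hf hab) (fun a b hab => hg hab)
    (fun a b => ((hμ (OrderDual.ofDual a) (OrderDual.ofDual b)).trans
      (le_of_eq (mul_comm _ _)) :))
  exact key

/-- Indicator functions of lower sets are antitone. -/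
lemma antitone_indicator_lower {α : Type*} [Preorder α] {A : Set α}
    (hA : ∀ ⦃a b : α⦄, a ≤ b → b ∈ A → a ∈ A) :
    Antitone (A.indicator (1 : α → ℝ≥0)) := by
  intro a b hab
  by_cases hb : b ∈ A
  · rw [Set.indicator_of_mem hb, Set.indicator_of_mem (hA hab hb)]
    exact le_rfl
  · rw [Set.indicator_of_notMem hb]
    exact zero_le

/-- Harris inequality for two lower sets, in terms of weighted sums of indicators. -/
lemma harris_lowerSets {α : Type*} [Fintype α] [DistribLattice α]
    (W : α → ℝ≥0) (hW : ∀ a b, W a * W b ≤ W (a ⊓ b) * W (a ⊔ b))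
    (A C : Set α)
    (hA : ∀ ⦃a b : α⦄, a ≤ b → b ∈ A → a ∈ A)
    (hC : ∀ ⦃a b : α⦄, a ≤ b → b ∈ C → a ∈ C) :
    (∑ a, W a * A.indicator 1 a) * ∑ a, W a * C.indicator 1 a
      ≤ (∑ a, W a) * ∑ a, W a * (A ∩ C).indicator 1 a := by
  have key := harris_antitone W (A.indicator 1) (C.indicator 1)
    (antitone_indicator_lower hA) (antitone_indicator_lower hC) hW
  have e : ∀ a, A.indicator (1 : α → ℝ≥0) a * C.indicator 1 a
      = (A ∩ C).indicator 1 a := by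
    intro a
    by_cases h1 : a ∈ A <;> by_cases h2 : a ∈ C
    · rw [Set.indicator_of_mem h1, Set.indicator_of_mem h2,
        Set.indicator_of_mem (Set.mem_inter h1 h2)]
      simp
    · rw [Set.indicator_of_notMem h2, Set.indicator_of_notMem
        (fun h => h2 (Set.mem_of_mem_inter_right h)), mul_zero]
    · rw [Set.indicator_of_notMem h1, Set.indicator_of_notMem
        (fun h => h1 (Set.mem_of_mem_inter_left h)), zero_mul]
    · rw [Set.indicator_of_notMem h1, Set.indicator_of_notMem
        (fun h => h1 (Set.mem_of_mem_inter_left h)), zero_mul]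
  calc (∑ a, W a * A.indicator 1 a) * ∑ a, W a * C.indicator 1 a
      ≤ (∑ a, W a) * ∑ a, W a * (A.indicator 1 a * C.indicator 1 a) := key
    _ = (∑ a, W a) * ∑ a, W a * (A ∩ C).indicator 1 a := by
        congr 1
        exact Finset.sum_congr rfl fun a _ => by rw [e a]

/-- Iterated Harris inequality over a finite family of lower sets, for a normalized weight. -/
lemma harris_family {α : Type*} [Fintype α] [DistribLattice α]
    {I : Type*} (W : α → ℝ≥0) (hW : ∀ a b, W a * W b ≤ W (a ⊓ b) * W (a ⊔ b))
    (hsum : ∑ a, W a = 1) (A : I → Set α)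
    (hA : ∀ i, ∀ ⦃a b : α⦄, a ≤ b → b ∈ A i → a ∈ A i) (s : Finset I) :
    ∏ i ∈ s, (∑ a, W a * (A i).indicator 1 a)
      ≤ ∑ a, W a * (⋂ i ∈ s, A i).indicator 1 a := by
  classical
  induction s using Finset.induction_on with
  | empty => simp [hsum]
  | @insert j s hj ih =>
      have hCl : ∀ ⦃a b : α⦄, a ≤ b → b ∈ ⋂ i ∈ s, A i → a ∈ ⋂ i ∈ s, A i := by
        intro a b hab hb
        simp only [Set.mem_iInter] at hb ⊢
        exact fun i hi => hA i hab (hb i hi)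
      have key := harris_lowerSets W hW (A j) (⋂ i ∈ s, A i) (hA j) hCl
      rw [hsum, one_mul] at key
      have hincl : (⋂ i ∈ insert j s, A i) = A j ∩ ⋂ i ∈ s, A i := by
        ext ω; simp
      rw [hincl]
      calc ∏ i ∈ insert j s, (∑ a, W a * (A i).indicator 1 a)
          = (∑ a, W a * (A j).indicator 1 a)
            * ∏ i ∈ s, (∑ a, W a * (A i).indicator 1 a) := by
            rw [Finset.prod_insert hj]
        _ ≤ (∑ a, W a * (A j).indicator 1 a)
            * ∑ a, W a * (⋂ i ∈ s, A i).indicator 1 a :=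
            mul_le_mul_right ih _
        _ ≤ ∑ a, W a * (A j ∩ ⋂ i ∈ s, A i).indicator 1 a := key

/-- FKG/Harris inequality for the decreasing events `{B_i ⊄ X_p}`: if
`X_p` is the `p`-random subset of a finite set `X` (modelled as a random function
`X → Bool` with independent `Bernoulli(p)` coordinates), then
`P(B_i ⊄ X_p for all i) ≥ Π_i P(B_i ⊄ X_p)`. -/
theorem stmt19 {X : Type*} [Fintype X] {I : Type*} [Fintype I]
    (B : I → Set X) (p : ℝ≥0∞) (hp : p ≤ 1) :
    ∏ i : I, (Measure.pi fun _ : X => (PMF.bernoulli p.toNNReal (by simpa using ENNReal.toNNReal_mono ENNReal.one_ne_top hp)).toMeasure)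
        {ω : X → Bool | ¬ B i ⊆ {x | ω x = true}} ≤
      (Measure.pi fun _ : X => (PMF.bernoulli p.toNNReal (by simpa using ENNReal.toNNReal_mono ENNReal.one_ne_top hp)).toMeasure)
        (⋂ i : I, {ω : X → Bool | ¬ B i ⊆ {x | ω x = true}}) := by
  classical
  set μpi := Measure.pi fun _ : X => (PMF.bernoulli p.toNNReal (by simpa using ENNReal.toNNReal_mono ENNReal.one_ne_top hp)).toMeasure with hμpi
  -- the NNReal weight
  obtain ⟨q, rfl⟩ : ∃ q : ℝ≥0, p = (q : ℝ≥0∞) :=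
    ⟨p.toNNReal, (ENNReal.coe_toNNReal (ne_top_of_le_ne_top ENNReal.one_ne_top hp)).symm⟩
  have hq : q ≤ 1 := by exact_mod_cast hp
  set w : Bool → ℝ≥0 := fun b => bif b then q else 1 - q with hw
  set W : (X → Bool) → ℝ≥0 := fun ω => ∏ x, w (ω x) with hWdef
  -- bernoulli singleton values
  have hbern : ∀ b : Bool, (PMF.bernoulli (q : ℝ≥0∞).toNNReal (by simpa using ENNReal.toNNReal_mono ENNReal.one_ne_top hp)).toMeasure {b} = (w b : ℝ≥0∞) := by
    intro b
    rw [PMF.toMeasure_apply_singleton _ _ (measurableSet_singleton b)]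
    rw [PMF.bernoulli_apply]
    cases b <;> simp [hw]
  -- measure of singletons
  have hsingle : ∀ ω : X → Bool, μpi {ω} = (W ω : ℝ≥0∞) := by
    intro ω
    have : ({ω} : Set (X → Bool)) = Set.pi Set.univ fun x => {ω x} := by
      ext τ
      simp [funext_iff, Set.mem_pi]
    rw [hμpi, this, Measure.pi_pi]
    rw [hWdef]
    push_cast
    exact Finset.prod_congr rfl fun x _ => hbern (ω x)
  -- measure of any set is the sum of its singleton weights
  have hmeas : ∀ S : Set (X → Bool),
      μpi S = ((∑ ω, W ω * S.indicator 1 ω : ℝ≥0) : ℝ≥0∞) := by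
    intro S
    have hS : S = ⋃ ω ∈ Finset.univ.filter (· ∈ S), ({ω} : Set (X → Bool)) := by
      ext τ; simp
    conv_lhs => rw [hS]
    rw [measure_biUnion_finset]
    · have : ∑ ω ∈ Finset.univ.filter (· ∈ S), μpi {ω}
          = ∑ ω ∈ Finset.univ.filter (· ∈ S), ((W ω : ℝ≥0) : ℝ≥0∞) :=
        Finset.sum_congr rfl fun ω _ => hsingle ω
      rw [this, ← ENNReal.coe_finset_sum, Finset.sum_filter]
      congr 1
      refine Finset.sum_congr rfl fun ω _ => ?_
      by_cases h : ω ∈ S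
      · rw [if_pos h, Set.indicator_of_mem h]
        simp
      · rw [if_neg h, Set.indicator_of_notMem h, mul_zero]
    · intro a _ b _ hab
      simp [Set.disjoint_singleton, hab]
    · intro b _
      exact measurableSet_singleton b
  -- log-supermodularity of the weight (in fact equality)
  have hWsup : ∀ a b : X → Bool, W a * W b ≤ W (a ⊓ b) * W (a ⊔ b) := by
    intro a b
    rw [hWdef]
    simp only [← Finset.prod_mul_distrib]
    refine le_of_eq (Finset.prod_congr rfl fun x _ => ?_)
    show w (a x) * w (b x) = w (min (a x) (b x)) * w (max (a x) (b x))
    rcases le_total (a x) (b x) with h | h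
    · rw [min_eq_left h, max_eq_right h]
    · rw [min_eq_right h, max_eq_left h, mul_comm]
  -- normalization
  have hWsum : ∑ ω : X → Bool, W ω = 1 := by
    rw [hWdef]
    rw [← Fintype.piFinset_univ, ← Finset.prod_univ_sum]
    have h1 : w true + w false = 1 := add_tsub_cancel_of_le hq
    simp [h1]
  -- the events are lower sets
  set A : I → Set (X → Bool) := fun i => {ω : X → Bool | ¬ B i ⊆ {x | ω x = true}} with hA
  have hAlower : ∀ i, ∀ ⦃a b : X → Bool⦄, a ≤ b → b ∈ A i → a ∈ A i := by
    intro i a b hab hb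
    rw [hA] at hb ⊢
    simp only [Set.mem_setOf_eq, Set.subset_def, Set.mem_setOf_eq, not_forall] at hb ⊢
    obtain ⟨x, hx, hxb⟩ := hb
    refine ⟨x, hx, fun hxa => hxb ?_⟩
    have h := hab x
    rw [hxa] at h
    exact (le_antisymm h (Bool.le_true _)).symm
  -- put everything together
  have key := harris_family W hWsup hWsum A hAlower Finset.univ
  have hfin : (⋂ i ∈ Finset.univ, A i) = ⋂ i : I, A i := by simp
  rw [hfin] at key
  calc ∏ i : I, μpi (A i)
      = ∏ i : I, ((∑ ω, W ω * (A i).indicator 1 ω : ℝ≥0) : ℝ≥0∞) :=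
        Finset.prod_congr rfl fun i _ => hmeas (A i)
    _ = ((∏ i : I, ∑ ω, W ω * (A i).indicator 1 ω : ℝ≥0) : ℝ≥0∞) := by
        rw [ENNReal.coe_finset_prod]
    _ ≤ ((∑ ω, W ω * (⋂ i : I, A i).indicator 1 ω : ℝ≥0) : ℝ≥0∞) := by
        exact_mod_cast key
    _ = μpi (⋂ i : I, A i) := (hmeas _).symm
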